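/- Let (W,S) be a Coxeter system with exactly one bad 5-edge. If B is a bad separator of S with head A = {a,b,c}, eyes {a,b}, and good focus f, then D = {a,b} ∪ A^⊥ is a gross separator of S with head A and good focus f. -/

import Mathlib

/-- A simple graph is *chordal* if every cycle of length at least four has a chord,
that is, an edge of the graph joining two vertices of the cycle that is not an
edge of the cycle. -/
def SimpleGraph.IsChordal {V : Type*} (G : SimpleGraph V) : Prop :=
  ∀ ⦃v : V⦄ (w : G.Walk v v), w.IsCycle → 4 ≤ w.length →
    ∃ a b, a ∈ w.support ∧ b ∈ w.support ∧ G.Adj a b ∧ s(a, b) ∉ w.edges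

/-- `B` is a `(c,f)`-separator of `G`: `c, f ∉ B` and `c` and `f` lie in different
connected components of the induced subgraph `G − B`. -/
def SimpleGraph.IsSeparator {V : Type*} (G : SimpleGraph V) (c f : V) (Bs : Set V) : Prop :=
  ∃ (hc : c ∈ Bsᶜ) (hf : f ∈ Bsᶜ), ¬ (G.induce Bsᶜ).Reachable ⟨c, hc⟩ ⟨f, hf⟩

/-- `B` is a minimal `(c,f)`-separator: no proper subset of `B` is a `(c,f)`-separator. -/
def SimpleGraph.IsMinSeparator {V : Type*} (G : SimpleGraph V) (c f : V) (Bs : Set V) : Prop :=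
  G.IsSeparator c f Bs ∧ ∀ Bs' ⊂ Bs, ¬ G.IsSeparator c f Bs'

/-- `u` and `g` lie in the same connected component of `G − B`. -/
def SimpleGraph.InSepComp {V : Type*} (G : SimpleGraph V) (Bs : Set V) (u g : V) : Prop :=
  ∃ (hu : u ∈ Bsᶜ) (hg : g ∈ Bsᶜ), (G.induce Bsᶜ).Reachable ⟨u, hu⟩ ⟨g, hg⟩

namespace CoxeterMatrix

variable {B : Type*}

/-- The underlying graph of the presentation diagram of a Coxeter matrix:
vertices are the indices, and `s, t` are adjacent when `m(s,t) < ∞`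
(`0` encodes `∞`). -/
def pDiagram (M : CoxeterMatrix B) : SimpleGraph B where
  Adj s t := s ≠ t ∧ M s t ≠ 0
  symm := ⟨by intro s t h; exact ⟨h.1.symm, by rw [M.symmetric]; exact h.2⟩⟩
  loopless := ⟨by intro s h; exact h.1 rfl⟩

/-- The underlying graph of the Coxeter diagram induced on a subset `A`:
`s, t ∈ A` are adjacent when `m(s,t) > 2` (including `m(s,t) = ∞`, encoded by `0`). -/
def cDiagramOn (M : CoxeterMatrix B) (A : Set B) : SimpleGraph A where
  Adj s t := (s : B) ≠ (t : B) ∧ M s t ≠ 2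
  symm := ⟨by intro s t h; exact ⟨h.1.symm, by rw [M.symmetric]; exact h.2⟩⟩
  loopless := ⟨by intro s h; exact h.1 rfl⟩

/-- A *simplex*: a subset whose elements pairwise satisfy `m(s,t) < ∞`. -/
def IsSimplex (M : CoxeterMatrix B) (A : Set B) : Prop :=
  A.Pairwise fun s t => M s t ≠ 0

/-- A subset is *irreducible* if its Coxeter diagram is connected. -/
def IsIrreducible (M : CoxeterMatrix B) (A : Set B) : Prop :=
  (M.cDiagramOn A).Connected

def IsIrredSimplex (M : CoxeterMatrix B) (A : Set B) : Prop :=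
  M.IsSimplex A ∧ M.IsIrreducible A

/-- A maximal irreducible simplex. -/
def IsMaxIrredSimplex (M : CoxeterMatrix B) (A : Set B) : Prop :=
  M.IsIrredSimplex A ∧ ∀ A' : Set B, A ⊂ A' → ¬ M.IsIrredSimplex A'

/-- `A^⊥ = {s : m(s,a) = 2 for all a ∈ A}`. -/
def perp (M : CoxeterMatrix B) (A : Set B) : Set B :=
  {s | ∀ a ∈ A, M s a = 2}

/-- Type `G₃` (= `H₃`): labels `3, 5` on a path, other label `2`. -/
def IsTypeG3 (M : CoxeterMatrix B) (A : Set B) : Prop :=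
  ∃ a b c : B, A = {a, b, c} ∧ M a b = 3 ∧ M b c = 5 ∧ M a c = 2

/-- Type `G₄` (= `H₄`): labels `3, 3, 5` on a path, other labels `2`. -/
def IsTypeG4 (M : CoxeterMatrix B) (A : Set B) : Prop :=
  ∃ a b c d : B, A = {a, b, c, d} ∧ M a b = 3 ∧ M b c = 3 ∧ M c d = 5 ∧
    M a c = 2 ∧ M a d = 2 ∧ M b d = 2

/-- A set of *bad edges*: a symmetric set of pairs `{a,b}` with `m(a,b) ≥ 5` such that
every irreducible simplex properly containing `{a,b}` is of type `G₃` or `G₄`. -/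
def IsBadEdgeSet (M : CoxeterMatrix B) (E : B → B → Prop) : Prop :=
  (∀ a b, E a b → E b a) ∧
  (∀ a b, E a b → M a b = 0 ∨ 5 ≤ M a b) ∧
  (∀ a b, E a b → ∀ A : Set B, M.IsIrredSimplex A → ({a, b} : Set B) ⊂ A →
    M.IsTypeG3 A ∨ M.IsTypeG4 A)

/-- A *bad* irreducible simplex: an irreducible simplex containing a bad edge. -/
def IsBadSimplex (M : CoxeterMatrix B) (E : B → B → Prop) (A : Set B) : Prop :=
  M.IsIrredSimplex A ∧ ∃ a ∈ A, ∃ b ∈ A, E a b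

/-- A *bad separator*: a subset `Bs` containing a pair of eyes `a, b` with `m(a,b) = 2`,
with a bad focus `c ∉ Bs` making `{a,b,c}` a bad maximal irreducible simplex,
`Bs ⊆ {a,b} ∪ {a,b,c}^⊥`, and with a good focus `f ∉ Bs` making `Bs` a minimal
`(c,f)`-separator of the presentation diagram. -/
def IsBadSeparator (M : CoxeterMatrix B) (E : B → B → Prop) (Bs : Set B) : Prop :=
  ∃ a b c : B, a ∈ Bs ∧ b ∈ Bs ∧ M a b = 2 ∧ c ∉ Bs ∧
    M.IsMaxIrredSimplex {a, b, c} ∧ M.IsBadSimplex E {a, b, c} ∧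
    Bs ⊆ {a, b} ∪ M.perp {a, b, c} ∧
    ∃ f, f ∉ Bs ∧ M.pDiagram.IsMinSeparator c f Bs

/-- `{x, y}` is a bad 5-edge: `m(x,y) = 5` and every irreducible simplex
properly containing `{x,y}` is of type `G₃` or `G₄`. -/
def IsBad5Edge (M : CoxeterMatrix B) (x y : B) : Prop :=
  x ≠ y ∧ M x y = 5 ∧ ∀ A : Set B, M.IsIrredSimplex A → ({x, y} : Set B) ⊂ A →
    M.IsTypeG3 A ∨ M.IsTypeG4 A

/-- The bad-edge set consisting of the single unordered pair `{x, y}`. -/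
def singleEdge (x y : B) : B → B → Prop :=
  fun u v => (u = x ∧ v = y) ∨ (u = y ∧ v = x)

end CoxeterMatrix



private lemma walk_to_induce {V : Type*} {G : SimpleGraph V} {s : Set V} :
    ∀ {u v : V} (p : G.Walk u v) (hp : ∀ w ∈ p.support, w ∈ s),
    (G.induce s).Reachable ⟨u, hp u p.start_mem_support⟩ ⟨v, hp v p.end_mem_support⟩ := by
  intro u v p
  induction p with
  | nil => intro hp; exact SimpleGraph.Reachable.refl _
  | @cons u w v h q ih =>
      intro hp
      have hw : w ∈ s := hp w (by simp)
      have h1 : (G.induce s).Adj ⟨u, hp u (SimpleGraph.Walk.start_mem_support _)⟩ ⟨w, hw⟩ := h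
      exact h1.reachable.trans (ih fun x hx => hp x (by simp [hx]))

private lemma reach_to_walk {V : Type*} {G : SimpleGraph V} {s : Set V} {u v : s}
    (h : (G.induce s).Reachable u v) :
    ∃ p : G.Walk u.1 v.1, ∀ w ∈ p.support, w ∈ s := by
  obtain ⟨p⟩ := h
  refine ⟨p.map (SimpleGraph.Embedding.induce s).toHom, ?_⟩
  intro w hw
  replace hw : w ∈ (p.map (SimpleGraph.Embedding.induce s).toHom).support := hw
  rw [SimpleGraph.Walk.support_map, List.mem_map] at hw
  obtain ⟨x, -, rfl⟩ := hw
  exact x.2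

private lemma no_walk_of_sep {V : Type*} {G : SimpleGraph V} {c f : V} {Bs : Set V}
    (h : G.IsSeparator c f Bs) (p : G.Walk c f) : ¬ ∀ w ∈ p.support, w ∉ Bs := by
  obtain ⟨hc, hf, hnr⟩ := h
  intro hp
  exact hnr (walk_to_induce p hp)

private lemma sep_mono {V : Type*} {G : SimpleGraph V} {c f : V} {Bs D : Set V}
    (h : G.IsSeparator c f Bs) (hBD : Bs ⊆ D) (hcD : c ∉ D) (hfD : f ∉ D) :
    G.IsSeparator c f D := by
  refine ⟨hcD, hfD, fun hr => ?_⟩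
  obtain ⟨p, hp⟩ := reach_to_walk hr
  exact no_walk_of_sep h p fun w hw hwB => hp w hw (hBD hwB)

private lemma eye_not_sep {V : Type*} {G : SimpleGraph V} {c f e : V} {Bs D : Set V}
    (hmin : G.IsMinSeparator c f Bs)
    (heBs : e ∈ Bs) (hcD : c ∉ D) (hfD : f ∉ D)
    (hce : G.Adj c e)
    (hadj : ∀ w ∈ D, w ≠ e → w ∉ Bs → G.Adj c w) :
    ¬ G.IsSeparator c f (D \ {e}) := by
  classical
  obtain ⟨hsep, hminp⟩ := hmin
  obtain ⟨hcB, hfB, hnrBs⟩ := hsep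
  rintro ⟨h1, h2, hnr'⟩
  -- a walk from c to f avoiding `Bs \ {e}`
  have hss : Bs \ {e} ⊂ Bs := ⟨Set.diff_subset, fun hle => (hle heBs).2 rfl⟩
  have hns := hminp _ hss
  have hcB' : c ∈ (Bs \ {e})ᶜ := fun h => hcB h.1
  have hfB' : f ∈ (Bs \ {e})ᶜ := fun h => hfB h.1
  have hre : (G.induce (Bs \ {e})ᶜ).Reachable ⟨c, hcB'⟩ ⟨f, hfB'⟩ := by
    by_contra hcon
    exact hns ⟨hcB', hfB', hcon⟩
  obtain ⟨p, hp⟩ := reach_to_walk hre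
  by_cases he : e ∈ p.support
  · -- take the tail of `p` after the last occurrence of `e`
    have he' : e ∈ p.reverse.support := by
      rwa [SimpleGraph.Walk.support_reverse, List.mem_reverse]
    set q := (p.reverse.takeUntil e he').reverse with hqdef
    have hqsub : ∀ w ∈ q.support, w ∈ p.support := by
      intro w hw
      rw [hqdef, SimpleGraph.Walk.support_reverse, List.mem_reverse] at hw
      have := SimpleGraph.Walk.support_takeUntil_subset _ he' hw
      rwa [SimpleGraph.Walk.support_reverse, List.mem_reverse] at this
    have hcount : q.support.count e = 1 := by
      rw [hqdef, SimpleGraph.Walk.support_reverse, List.count_reverse]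
      exact SimpleGraph.Walk.count_support_takeUntil_eq_one _ he'
    have hq : ∀ w ∈ q.support, w ∉ D \ {e} := by
      intro w hw hwD
      have hwe : w ≠ e := fun h => hwD.2 h
      have hwBs : w ∉ Bs := fun hwB => hp w (hqsub w hw) ⟨hwB, hwe⟩
      have hcw : G.Adj c w := hadj w hwD.1 hwe hwBs
      set r := q.dropUntil w hw with hrdef
      have her : e ∉ r.support := by
        have hsplit : q.support = (q.takeUntil w hw).support ++ r.support.tail := by
          conv_lhs => rw [← q.take_spec hw]
          exact SimpleGraph.Walk.support_append _ _
        have h1' : 0 < (q.takeUntil w hw).support.count e :=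
          List.count_pos_iff.mpr (q.takeUntil w hw).start_mem_support
        have h0 : r.support.tail.count e = 0 := by
          have hc2 := hcount
          rw [hsplit, List.count_append] at hc2
          omega
        intro hh
        rw [r.support_eq_cons, List.mem_cons] at hh
        rcases hh with hh | hh
        · exact hwe hh.symm
        · exact absurd hh (List.count_eq_zero.mp h0)
      refine no_walk_of_sep ⟨hcB, hfB, hnrBs⟩ (SimpleGraph.Walk.cons hcw r) ?_
      intro x hx
      rw [SimpleGraph.Walk.support_cons, List.mem_cons] at hx
      rcases hx with rfl | hx
      · exact hcB
      · intro hxB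
        have hxe : x ≠ e := fun h => her (h ▸ hx)
        exact hp x (hqsub x (SimpleGraph.Walk.support_dropUntil_subset _ hw hx)) ⟨hxB, hxe⟩
    -- the walk `c :: q` avoids `D \ {e}`
    have hmem : ∀ w ∈ (SimpleGraph.Walk.cons hce q).support, w ∈ (D \ {e})ᶜ := by
      intro w hw
      rw [SimpleGraph.Walk.support_cons, List.mem_cons] at hw
      rcases hw with rfl | hw
      · exact fun h => hcD h.1
      · exact hq w hw
    exact hnr' (walk_to_induce (SimpleGraph.Walk.cons hce q) hmem)
  · exact no_walk_of_sep ⟨hcB, hfB, hnrBs⟩ p fun w hw hwB =>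
      hp w hw ⟨hwB, fun hwe => he (hwe ▸ hw)⟩

/-- **Lemma 5.8.** Let `(W,S)` be a Coxeter system with exactly one bad 5-edge. If
`Bs` is a bad separator with head `A = {a,b,c}`, eyes `{a,b}`, and good focus `f`,
then `D = {a,b} ∪ A^⊥` is a gross separator with head `A` and good focus `f`:
`c, f ∉ D`, `D` is a `(c,f)`-separator of `Γ(W,S)`, and neither `D − {a}` nor
`D − {b}` is a `(c,f)`-separator. -/
theorem grossSeparator_of_badSeparator {B : Type*} (M : CoxeterMatrix B)
    (x y : B) (hxy : M.IsBad5Edge x y) (a b c : B) (hab : M a b = 2)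
    (hA : M.IsMaxIrredSimplex {a, b, c})
    (hbad : M.IsBadSimplex (CoxeterMatrix.singleEdge x y) {a, b, c})
    (Bs : Set B) (ha : a ∈ Bs) (hb : b ∈ Bs) (hc : c ∉ Bs)
    (hsub : Bs ⊆ ({a, b} : Set B) ∪ M.perp {a, b, c})
    (f : B) (hf : f ∉ Bs) (hmin : M.pDiagram.IsMinSeparator c f Bs) :
    c ∉ ({a, b} : Set B) ∪ M.perp {a, b, c} ∧
    f ∉ ({a, b} : Set B) ∪ M.perp {a, b, c} ∧
    M.pDiagram.IsSeparator c f (({a, b} : Set B) ∪ M.perp {a, b, c}) ∧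
    ¬ M.pDiagram.IsSeparator c f ((({a, b} : Set B) ∪ M.perp {a, b, c}) \ {a}) ∧
    ¬ M.pDiagram.IsSeparator c f ((({a, b} : Set B) ∪ M.perp {a, b, c}) \ {b}) := by
  
  classical
  obtain ⟨⟨hcB, hfB, hnrBs⟩, hminp⟩ := hmin
  have hacne : a ≠ c := fun h => hc (h ▸ ha)
  have hbcne : b ≠ c := fun h => hc (h ▸ hb)
  have hmemA : a ∈ ({a, b, c} : Set B) := by simp
  have hmemB : b ∈ ({a, b, c} : Set B) := by simp
  have hmemC : c ∈ ({a, b, c} : Set B) := by simp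
  have hMac : M a c ≠ 0 := hA.1.1 hmemA hmemC hacne
  have hMbc : M b c ≠ 0 := hA.1.1 hmemB hmemC hbcne
  have hcD : c ∉ ({a, b} : Set B) ∪ M.perp {a, b, c} := by
    rintro (h | h)
    · simp only [Set.mem_insert_iff, Set.mem_singleton_iff] at h
      rcases h with rfl | rfl
      · exact hacne rfl
      · exact hbcne rfl
    · have h2 : M c c = 2 := h c hmemC
      rw [M.diagonal] at h2
      omega
  have hcf : c ≠ f := by
    intro h; subst h; exact hnrBs (SimpleGraph.Reachable.refl _)
  have hfD : f ∉ ({a, b} : Set B) ∪ M.perp {a, b, c} := by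
    rintro (h | h)
    · simp only [Set.mem_insert_iff, Set.mem_singleton_iff] at h
      rcases h with rfl | rfl
      · exact hf ha
      · exact hf hb
    · have h2 : M f c = 2 := h c hmemC
      have hadjcf : M.pDiagram.Adj c f := ⟨hcf, by rw [M.symmetric]; omega⟩
      refine no_walk_of_sep ⟨hcB, hfB, hnrBs⟩ hadjcf.toWalk ?_
      intro w hw
      simp only [SimpleGraph.Adj.toWalk, SimpleGraph.Walk.support_cons,
        SimpleGraph.Walk.support_nil, List.mem_cons, List.mem_singleton,
        List.not_mem_nil, or_false] at hw
      rcases hw with rfl | rfl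
      · exact hc
      · exact hf
  have hadjca : M.pDiagram.Adj c a := ⟨fun h => hacne h.symm, by rw [M.symmetric]; exact hMac⟩
  have hadjcb : M.pDiagram.Adj c b := ⟨fun h => hbcne h.symm, by rw [M.symmetric]; exact hMbc⟩
  have hperpadj : ∀ w, w ∈ M.perp {a, b, c} → w ∉ Bs → M.pDiagram.Adj c w := by
    intro w hwp hwB
    have h2 : M w c = 2 := hwp c hmemC
    have hcw : c ≠ w := by
      intro h
      rw [← h, M.diagonal] at h2
      omega
    exact ⟨hcw, by rw [M.symmetric]; omega⟩
  have hadjA : ∀ w ∈ ({a, b} : Set B) ∪ M.perp {a, b, c}, w ≠ a → w ∉ Bs →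
      M.pDiagram.Adj c w := by
    rintro w (h | h) hwa hwB
    · simp only [Set.mem_insert_iff, Set.mem_singleton_iff] at h
      rcases h with rfl | rfl
      · exact absurd rfl hwa
      · exact absurd hb hwB
    · exact hperpadj w h hwB
  have hadjB : ∀ w ∈ ({a, b} : Set B) ∪ M.perp {a, b, c}, w ≠ b → w ∉ Bs →
      M.pDiagram.Adj c w := by
    rintro w (h | h) hwb hwB
    · simp only [Set.mem_insert_iff, Set.mem_singleton_iff] at h
      rcases h with rfl | rfl
      · exact absurd ha hwB
      · exact absurd rfl hwb
    · exact hperpadj w h hwB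
  exact ⟨hcD, hfD, sep_mono ⟨hcB, hfB, hnrBs⟩ hsub hcD hfD,
    eye_not_sep ⟨⟨hcB, hfB, hnrBs⟩, hminp⟩ ha hcD hfD hadjca hadjA,
    eye_not_sep ⟨⟨hcB, hfB, hnrBs⟩, hminp⟩ hb hcD hfD hadjcb hadjB⟩
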